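/- Let f: ℤ → ℂ have finite support, define f̂(α) = ∑_{n∈ℤ} f(n)e^{-2πinα}, and let M_r(f) = {α ∈ [0,1) : ∃ a with gcd(a,r)=1, |α - a/r| < ε} for fixed ε > 0 small enough that these sets are pairwise disjoint for distinct reduced fractions with denominators at most Q, and let M'_q = ∪_{r|q} M_r. Then for any Q ∈ ℕ, max_{q≤Q} ∫_{M'_q} |f̂(α)|² dα ≥ (1/2)·∑_{q=1}^{Q} q⁻¹ ∫_{M_q} |f̂(α)|² dα. -/

import Mathlib

open Finset MeasureTheory

/-- Fourier transform on ℤ of a finitely supported function. -/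
noncomputable def fourierTransformZ (f : ℤ → ℂ) (α : ℝ) : ℂ :=
  ∑' n : ℤ, f n * Complex.exp (-(2 * Real.pi * Complex.I) * n * α)

/-- Major arc `M_r`: points of `[0,1)` within `ε` of a reduced fraction `a/r`. -/
def majorArcSet (ε : ℝ) (r : ℕ) : Set ℝ :=
  {α | α ∈ Set.Ico (0 : ℝ) 1 ∧ ∃ a : ℤ, Int.gcd a r = 1 ∧ |α - (a : ℝ) / r| < ε}

theorem major_arc_L2_pigeonhole (f : ℤ → ℂ) (hf : (Function.support f).Finite)
    (ε : ℝ) (hε : 0 < ε) (Q : ℕ) (hQ : 1 ≤ Q) (hdisj : 2 * (Q : ℝ) ^ 2 * ε < 1) :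
    ∃ q : ℕ, 1 ≤ q ∧ q ≤ Q ∧
      (1 / 2) * ∑ r ∈ Finset.Icc 1 Q, (r : ℝ)⁻¹ *
          ∫ α in majorArcSet ε r, ‖fourierTransformZ f α‖ ^ 2
        ≤ ∫ α in (⋃ r ∈ Nat.divisors q, majorArcSet ε r),
            ‖fourierTransformZ f α‖ ^ 2 := by
  set g : ℝ → ℝ := fun α => ‖fourierTransformZ f α‖ ^ 2 with hg
  -- continuity of g
  have hft : ∀ α : ℝ, fourierTransformZ f α =
      ∑ n ∈ hf.toFinset, f n * Complex.exp (-(2 * Real.pi * Complex.I) * n * α) := by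
    intro α
    refine tsum_eq_sum ?_
    intro n hn
    have : f n = 0 := Function.notMem_support.mp (fun h => hn (hf.mem_toFinset.mpr h))
    simp [this]
  have hcont : Continuous g := by
    have : Continuous (fun α : ℝ => fourierTransformZ f α) := by
      simp only [hft]
      refine continuous_finset_sum _ (fun n _ => Continuous.mul continuous_const ?_)
      exact Complex.continuous_exp.comp (by continuity)
    exact (continuous_norm.comp this).pow 2
  have hg0 : ∀ α, 0 ≤ g α := fun α => by positivity
  -- measurability
  have hmeas : ∀ r : ℕ, MeasurableSet (majorArcSet ε r) := by
    intro r
    have : majorArcSet ε r = Set.Ico (0 : ℝ) 1 ∩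
        ⋃ a : ℤ, ⋃ _ : Int.gcd a r = 1, Metric.ball ((a : ℝ) / r) ε := by
      ext α
      simp [majorArcSet, Real.dist_eq]
    rw [this]
    exact measurableSet_Ico.inter
      (MeasurableSet.iUnion fun a => MeasurableSet.iUnion fun _ => measurableSet_ball)
  have hsub : ∀ r : ℕ, majorArcSet ε r ⊆ Set.Icc (0 : ℝ) 1 := fun r α hα =>
    Set.Ico_subset_Icc_self hα.1
  have hint : ∀ r : ℕ, IntegrableOn g (majorArcSet ε r) := fun r =>
    (hcont.integrableOn_Icc (a := 0) (b := 1)).mono_set (hsub r)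
  -- nonnegativity of the integrals
  have hI0 : ∀ r : ℕ, 0 ≤ ∫ α in majorArcSet ε r, g α := fun r =>
    setIntegral_nonneg (hmeas r) (fun α _ => hg0 α)
  -- disjointness of major arcs for distinct denominators ≤ Q
  have hdisjoint : ∀ r ∈ Finset.Icc 1 Q, ∀ s ∈ Finset.Icc 1 Q, r ≠ s →
      Disjoint (majorArcSet ε r) (majorArcSet ε s) := by
    intro r hr s hs hrs
    rw [Finset.mem_Icc] at hr hs
    rw [Set.disjoint_left]
    rintro α ⟨_, a, ha, haε⟩ ⟨_, b, hb, hbε⟩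
    have hr0 : (0 : ℝ) < r := by exact_mod_cast hr.1
    have hs0 : (0 : ℝ) < s := by exact_mod_cast hs.1
    have hne : (a : ℤ) * s - b * r ≠ 0 := by
      intro h
      have h' : (a : ℤ) * s = b * r := by linarith [sub_eq_zero.mp h]
      have hcop : IsCoprime (r : ℤ) a := (Int.isCoprime_iff_gcd_eq_one.mpr ha).symm
      have hdr : (r : ℤ) ∣ s := by
        refine hcop.dvd_of_dvd_mul_left ?_
        exact ⟨b, by linarith [h']⟩
      have hcop' : IsCoprime (s : ℤ) b := (Int.isCoprime_iff_gcd_eq_one.mpr hb).symm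
      have hds : (s : ℤ) ∣ r := by
        refine hcop'.dvd_of_dvd_mul_left ?_
        exact ⟨a, by linarith [h']⟩
      have : (r : ℤ) = s := Int.dvd_antisymm (by positivity) (by positivity) hdr hds
      exact hrs (by exact_mod_cast this)
    have h1 : (1 : ℝ) ≤ |((a * s - b * r : ℤ) : ℝ)| := by
      rw [← Int.cast_abs]
      exact_mod_cast Int.one_le_abs hne
    have heq : (a : ℝ) / r - (b : ℝ) / s = ((a * s - b * r : ℤ) : ℝ) / (r * s) := by
      push_cast
      field_simp
    have htri : |(a : ℝ) / r - (b : ℝ) / s| < 2 * ε := by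
      calc |(a : ℝ) / r - (b : ℝ) / s|
          ≤ |(a : ℝ) / r - α| + |α - (b : ℝ) / s| := abs_sub_le _ _ _
        _ < ε + ε := by rw [abs_sub_comm ((a : ℝ) / r) α]; exact add_lt_add haε hbε
        _ = 2 * ε := by ring
    have habs : |((a * s - b * r : ℤ) : ℝ)| / (r * s) < 2 * ε := by
      rw [← abs_of_pos (mul_pos hr0 hs0), ← abs_div, ← heq]
      exact htri
    have hrsQ : (r : ℝ) * s ≤ (Q : ℝ) ^ 2 := by
      have h1 : (r : ℝ) ≤ Q := by exact_mod_cast hr.2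
      have h2 : (s : ℝ) ≤ Q := by exact_mod_cast hs.2
      nlinarith
    have : |((a * s - b * r : ℤ) : ℝ)| < 2 * ε * ((r : ℝ) * s) := by
      have := (div_lt_iff₀ (by positivity)).mp habs
      linarith
    nlinarith [abs_nonneg (((a * s - b * r : ℤ) : ℝ))]
  -- integral over the union of divisor arcs equals a sum, for q ≤ Q
  have hTeq : ∀ q ∈ Finset.Icc 1 Q,
      (∫ α in (⋃ r ∈ Nat.divisors q, majorArcSet ε r), g α)
        = ∑ r ∈ Nat.divisors q, ∫ α in majorArcSet ε r, g α := by
    intro q hq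
    rw [Finset.mem_Icc] at hq
    have hdivsub : Nat.divisors q ⊆ Finset.Icc 1 Q := by
      intro r hrd
      rw [Nat.mem_divisors] at hrd
      rw [Finset.mem_Icc]
      exact ⟨Nat.pos_of_dvd_of_pos hrd.1 hq.1, le_trans (Nat.le_of_dvd hq.1 hrd.1) hq.2⟩
    refine integral_biUnion_finset _ (fun r _ => hmeas r) ?_ (fun r _ => hint r)
    intro r hr s hs hrs
    exact hdisjoint r (hdivsub hr) s (hdivsub hs) hrs
  -- double counting
  have hdiv_eq : ∀ q ∈ Finset.Icc 1 Q,
      Nat.divisors q = (Finset.Icc 1 Q).filter (· ∣ q) := by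
    intro q hq
    rw [Finset.mem_Icc] at hq
    ext r
    simp only [Nat.mem_divisors, Finset.mem_filter, Finset.mem_Icc]
    constructor
    · rintro ⟨h1, h2⟩
      exact ⟨⟨Nat.pos_of_dvd_of_pos h1 hq.1, le_trans (Nat.le_of_dvd hq.1 h1) hq.2⟩, h1⟩
    · rintro ⟨⟨h1, _⟩, h3⟩
      exact ⟨h3, by omega⟩
  have hS : ∑ q ∈ Finset.Icc 1 Q, ∑ r ∈ Nat.divisors q, (∫ α in majorArcSet ε r, g α)
      = ∑ r ∈ Finset.Icc 1 Q, ((Q / r : ℕ) : ℝ) * ∫ α in majorArcSet ε r, g α := by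
    rw [Finset.sum_congr rfl (fun q hq => by rw [hdiv_eq q hq])]
    rw [Finset.sum_congr rfl
      (fun q _ => Finset.sum_filter (· ∣ q) (fun r => ∫ α in majorArcSet ε r, g α))]
    rw [Finset.sum_comm]
    refine Finset.sum_congr rfl (fun r hr => ?_)
    rw [← Finset.sum_filter]
    rw [Finset.sum_const]
    have hcard : ((Finset.Icc 1 Q).filter (r ∣ ·)).card = Q / r := by
      have : Finset.Icc 1 Q = Finset.Ioc 0 Q := rfl
      rw [this]
      exact Nat.Ioc_filter_dvd_card_eq_div Q r
    rw [hcard, nsmul_eq_mul]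
  -- pigeonhole
  have hne : (Finset.Icc 1 Q).Nonempty := ⟨1, Finset.mem_Icc.mpr ⟨le_refl 1, hQ⟩⟩
  set S : ℝ := ∑ q ∈ Finset.Icc 1 Q, ∫ α in (⋃ r ∈ Nat.divisors q, majorArcSet ε r), g α
    with hSdef
  have hpig : ∃ q ∈ Finset.Icc 1 Q,
      (Q : ℝ)⁻¹ * S ≤ ∫ α in (⋃ r ∈ Nat.divisors q, majorArcSet ε r), g α := by
    refine Finset.exists_le_of_sum_le hne ?_
    rw [Finset.sum_const, Nat.card_Icc]
    have hQ0 : (0 : ℝ) < Q := by exact_mod_cast hQ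
    rw [hSdef]
    have : (Q + 1 - 1 : ℕ) = Q := by omega
    rw [this, nsmul_eq_mul]
    rw [← mul_assoc, mul_inv_cancel₀ (ne_of_gt hQ0), one_mul]
  obtain ⟨q, hqmem, hqle⟩ := hpig
  rw [Finset.mem_Icc] at hqmem
  refine ⟨q, hqmem.1, hqmem.2, ?_⟩
  refine le_trans ?_ hqle
  -- compare (1/2) ∑ r⁻¹ I r with Q⁻¹ S
  have hS' : S = ∑ r ∈ Finset.Icc 1 Q, ((Q / r : ℕ) : ℝ) * ∫ α in majorArcSet ε r, g α := by
    rw [hSdef, ← hS]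
    exact Finset.sum_congr rfl (fun q hq => hTeq q hq)
  rw [hS', Finset.mul_sum, Finset.mul_sum]
  refine Finset.sum_le_sum (fun r hr => ?_)
  rw [Finset.mem_Icc] at hr
  have hr0 : (0 : ℝ) < r := by exact_mod_cast hr.1
  have hQ0 : (0 : ℝ) < Q := by exact_mod_cast hQ
  -- key: Q < 2 * r * (Q / r)
  have hdivpos : 1 ≤ Q / r := (Nat.one_le_div_iff hr.1).mpr hr.2
  have hkey : Q < 2 * (r * (Q / r)) := by
    have h2 : r ≤ r * (Q / r) := Nat.le_mul_of_pos_right r hdivpos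
    calc Q = r * (Q / r) + Q % r := (Nat.div_add_mod Q r).symm
      _ < r * (Q / r) + r := Nat.add_lt_add_left (Nat.mod_lt Q hr.1) _
      _ ≤ r * (Q / r) + r * (Q / r) := Nat.add_le_add_left h2 _
      _ = 2 * (r * (Q / r)) := by ring
  have hkeyR : (Q : ℝ) ≤ 2 * (r * ((Q / r : ℕ) : ℝ)) := by
    have : (Q : ℝ) < 2 * ((r : ℝ) * ((Q / r : ℕ) : ℝ)) := by exact_mod_cast hkey
    linarith
  have hcoef : (1 / 2 : ℝ) * (r : ℝ)⁻¹ ≤ (Q : ℝ)⁻¹ * ((Q / r : ℕ) : ℝ) := by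
    rw [← sub_nonneg]
    have expand : (Q : ℝ)⁻¹ * ((Q / r : ℕ) : ℝ) - 1 / 2 * (r : ℝ)⁻¹
        = (2 * ((r : ℝ) * ((Q / r : ℕ) : ℝ)) - Q) / (2 * Q * r) := by
      field_simp [hQ0.ne', hr0.ne']
    rw [expand]
    exact div_nonneg (by linarith) (by positivity)
  calc (1 / 2 : ℝ) * ((r : ℝ)⁻¹ * ∫ α in majorArcSet ε r, g α)
      = ((1 / 2 : ℝ) * (r : ℝ)⁻¹) * ∫ α in majorArcSet ε r, g α := by ring
    _ ≤ ((Q : ℝ)⁻¹ * ((Q / r : ℕ) : ℝ)) * ∫ α in majorArcSet ε r, g α :=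
        mul_le_mul_of_nonneg_right hcoef (hI0 r)
    _ = (Q : ℝ)⁻¹ * (((Q / r : ℕ) : ℝ) * ∫ α in majorArcSet ε r, g α) := by ring
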